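/- arXiv:1710.10693 — 2 statements merged into one kernel-verified Lean document; each statement's English description precedes it below -/
import Mathlib

section
/- Fix n ≥ 1 and vectors β, γ ∈ ℝⁿ with β_i > 0 and γ_i < −1 for all i. For X ≥ 1, consider T(X) = Σ_{k ∈ ℤ_{≥1}ⁿ, ∏_i k_i^{β_i} ≥ X} ∏_i k_i^{γ_i}. Then for every ε > 0 one has T(X) = O_ε(X^{a(β,γ)+ε}), where a(β,γ) = max_{1≤i≤n} (γ_i + 1)/β_i (a negative number), with the constant depending only on n, β, γ and ε. -/
set_option maxHeartbeats 1000000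


noncomputable section

lemma hasSum_pi_prod : ∀ (n : ℕ) (g : Fin n → ℕ → ℝ), (∀ i m, 0 ≤ g i m) →
    (∀ i, Summable (g i)) →
    HasSum (fun k : Fin n → ℕ => ∏ i, g i (k i)) (∏ i, ∑' m, g i m) := by
  intro n
  induction n with
  | zero =>
    intro g _ _
    simpa using hasSum_fintype (fun k : Fin 0 → ℕ => ∏ i : Fin 0, g i (k i))
  | succ n ih =>
    intro g h0 hs
    have h2 := ih (fun i => g i.succ) (fun i m => h0 _ _) (fun i => hs _)
    have hS : Summable (fun x : ℕ × (Fin n → ℕ) =>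
        g 0 x.1 * ∏ i : Fin n, g i.succ (x.2 i)) := by
      have h2' : Summable (fun k : Fin n → ℕ => ∏ i : Fin n, g i.succ (k i)) := h2.summable
      have := Summable.mul_of_nonneg (hs 0) h2'
        (Pi.le_def.mpr fun m => h0 0 m)
        (Pi.le_def.mpr fun k => Finset.prod_nonneg fun i _ => h0 _ _)
      exact this
    have hmul : HasSum (fun x : ℕ × (Fin n → ℕ) => g 0 x.1 * ∏ i : Fin n, g i.succ (x.2 i))
        ((∑' m, g 0 m) * ∏ i : Fin n, ∑' m, g i.succ m) := by
      have := HasSum.mul (hs 0).hasSum h2 hS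
      exact this
    have hfe : (fun k : Fin (n+1) → ℕ => ∏ i, g i (k i)) =
        (fun x : ℕ × (Fin n → ℕ) => g 0 x.1 * ∏ i : Fin n, g i.succ (x.2 i)) ∘
          (Fin.consEquiv (fun _ => ℕ)).symm := by
      funext k
      simp [Fin.prod_univ_succ, Fin.tail]
    rw [hfe, Fin.prod_univ_succ]
    exact (Fin.consEquiv (fun _ => ℕ)).symm.hasSum_iff.mpr hmul

/-- **Weighted lattice-point sum over the tail region** (Lemma 4.6).  Fix `n ≥ 1` and
`β, γ : Fin n → ℝ` with `β i > 0` and `γ i < -1` for all `i`.  For `X ≥ 1` let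
`T(X) = Σ_{k ∈ ℤ₊ⁿ, ∏ kᵢ^{βᵢ} ≥ X} ∏ kᵢ^{γᵢ}`.  Then for every `ε > 0` one has
`T(X) = O_ε(X^{a(β,γ)+ε})` where `a(β,γ) = max_i (γ i + 1)/(β i)` (a negative
number). -/
theorem weighted_sum_above (n : ℕ) (hn : 0 < n) (β γ : Fin n → ℝ)
    (hβ : ∀ i, 0 < β i) (hγ : ∀ i, γ i < -1) :
    ∀ ε : ℝ, 0 < ε → ∃ C : ℝ, 0 < C ∧ ∀ X : ℝ, 1 ≤ X →
      Summable (fun k : {k : Fin n → ℕ // (∀ i, 1 ≤ k i) ∧ X ≤ ∏ i, (k i : ℝ) ^ (β i)} =>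
        ∏ i, ((k : Fin n → ℕ) i : ℝ) ^ (γ i)) ∧
      (∑' k : {k : Fin n → ℕ // (∀ i, 1 ≤ k i) ∧ X ≤ ∏ i, (k i : ℝ) ^ (β i)},
          ∏ i, ((k : Fin n → ℕ) i : ℝ) ^ (γ i))
        ≤ C * X ^ ((Finset.univ.sup' (Finset.univ_nonempty_iff.mpr ⟨⟨0, hn⟩⟩)
            fun i => (γ i + 1) / β i) + ε) := by
  intro ε hε
  set a : ℝ := Finset.univ.sup' (Finset.univ_nonempty_iff.mpr ⟨⟨0, hn⟩⟩)
    (fun i => (γ i + 1) / β i) with ha_def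
  have ha_neg : a < 0 := by
    rw [ha_def, Finset.sup'_lt_iff]
    intro i _
    exact div_neg_of_neg_of_pos (by linarith [hγ i]) (hβ i)
  have hm0 : 0 < min ε (-a) / 2 := by
    have := lt_min hε (by linarith : (0:ℝ) < -a)
    linarith
  set δ : ℝ := -a - min ε (-a) / 2 with hδ_def
  have hδpos : 0 < δ := by
    have := min_le_right ε (-a)
    rw [hδ_def]; linarith
  have hδlt : δ < -a := by rw [hδ_def]; linarith
  have hδge : -δ ≤ a + ε := by
    have := min_le_left ε (-a)
    rw [hδ_def]; linarith
  have hexp : ∀ i, γ i + δ * β i < -1 := by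
    intro i
    have h1 : (γ i + 1) / β i ≤ a := by
      rw [ha_def]
      exact Finset.le_sup' (fun i => (γ i + 1) / β i) (Finset.mem_univ i)
    have h2 : δ < -(γ i + 1) / β i := by
      rw [neg_div]; linarith
    have h3 := (lt_div_iff₀ (hβ i)).mp h2
    linarith
  set g : Fin n → ℕ → ℝ := fun i m => (m : ℝ) ^ (γ i + δ * β i) with hg_def
  have hg0 : ∀ i m, 0 ≤ g i m := fun i m => Real.rpow_nonneg (Nat.cast_nonneg m) _
  have hgs : ∀ i, Summable (g i) := fun i => Real.summable_nat_rpow.mpr (hexp i)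
  have hH := hasSum_pi_prod n g hg0 hgs
  set C : ℝ := ∏ i, ∑' m, g i m with hC_def
  have hCpos : 0 < C := by
    refine Finset.prod_pos fun i _ => ?_
    have h1 : g i 1 ≤ ∑' m, g i m := Summable.le_tsum (hgs i) 1 (fun j _ => hg0 i j)
    have : g i 1 = 1 := by simp [hg_def]
    linarith
  refine ⟨C, hCpos, ?_⟩
  intro X hX
  have hXpos : (0:ℝ) < X := by linarith
  have hΓ := hasSum_pi_prod n (fun i m => (m : ℝ) ^ (γ i))
    (fun i m => Real.rpow_nonneg (Nat.cast_nonneg m) _)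
    (fun i => Real.summable_nat_rpow.mpr (hγ i))
  have hsub : Summable (fun k : {k : Fin n → ℕ //
      (∀ i, 1 ≤ k i) ∧ X ≤ ∏ i, (k i : ℝ) ^ (β i)} =>
      ∏ i, ((k : Fin n → ℕ) i : ℝ) ^ (γ i)) :=
    hΓ.summable.subtype {k : Fin n → ℕ | (∀ i, 1 ≤ k i) ∧ X ≤ ∏ i, (k i : ℝ) ^ (β i)}
  refine ⟨hsub, ?_⟩
  have key : ∀ k : {k : Fin n → ℕ // (∀ i, 1 ≤ k i) ∧ X ≤ ∏ i, (k i : ℝ) ^ (β i)},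
      ∏ i, ((k : Fin n → ℕ) i : ℝ) ^ (γ i) ≤ X ^ (-δ) * ∏ i, g i ((k : Fin n → ℕ) i) := by
    rintro ⟨k, hk1, hk2⟩
    have hkpos : ∀ i, (0:ℝ) < (k i : ℝ) := by
      intro i
      exact_mod_cast Nat.lt_of_lt_of_le Nat.zero_lt_one (hk1 i)
    have hsplit : ∀ i, g i (k i) = (k i : ℝ) ^ (γ i) * ((k i : ℝ) ^ (β i)) ^ δ := by
      intro i
      simp only [hg_def]
      rw [Real.rpow_add (hkpos i), mul_comm δ (β i), Real.rpow_mul (hkpos i).le]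
    calc ∏ i, ((k : Fin n → ℕ) i : ℝ) ^ (γ i)
        = X ^ (-δ) * X ^ δ * ∏ i, (k i : ℝ) ^ (γ i) := by
          rw [← Real.rpow_add hXpos]; simp
      _ ≤ X ^ (-δ) * (∏ i, (k i : ℝ) ^ (β i)) ^ δ * ∏ i, (k i : ℝ) ^ (γ i) := by
          have hXd : X ^ δ ≤ (∏ i, (k i : ℝ) ^ (β i)) ^ δ :=
            Real.rpow_le_rpow hXpos.le hk2 hδpos.le
          have hp1 : (0:ℝ) ≤ X ^ (-δ) := Real.rpow_nonneg hXpos.le _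
          have hp2 : (0:ℝ) ≤ ∏ i, (k i : ℝ) ^ (γ i) :=
            Finset.prod_nonneg fun i _ => Real.rpow_nonneg (hkpos i).le _
          exact mul_le_mul_of_nonneg_right (mul_le_mul_of_nonneg_left hXd hp1) hp2
      _ = X ^ (-δ) * ∏ i, g i (k i) := by
          rw [mul_assoc]
          congr 1
          rw [← Real.finset_prod_rpow _ _ (fun i _ => Real.rpow_nonneg (hkpos i).le _) δ,
            ← Finset.prod_mul_distrib]
          exact Finset.prod_congr rfl fun i _ => by rw [hsplit i]; ring
  have hsubg : Summable (fun k : {k : Fin n → ℕ //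
      (∀ i, 1 ≤ k i) ∧ X ≤ ∏ i, (k i : ℝ) ^ (β i)} =>
      ∏ i, g i ((k : Fin n → ℕ) i)) :=
    hH.summable.subtype {k : Fin n → ℕ | (∀ i, 1 ≤ k i) ∧ X ≤ ∏ i, (k i : ℝ) ^ (β i)}
  have step1 := Summable.tsum_le_tsum key hsub (hsubg.mul_left (X ^ (-δ)))
  have step2 : (∑' k : {k : Fin n → ℕ //
      (∀ i, 1 ≤ k i) ∧ X ≤ ∏ i, (k i : ℝ) ^ (β i)},
      X ^ (-δ) * ∏ i, g i ((k : Fin n → ℕ) i)) =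
      X ^ (-δ) * ∑' k : {k : Fin n → ℕ //
      (∀ i, 1 ≤ k i) ∧ X ≤ ∏ i, (k i : ℝ) ^ (β i)}, ∏ i, g i ((k : Fin n → ℕ) i) :=
    tsum_mul_left
  have step3 : (∑' k : {k : Fin n → ℕ //
      (∀ i, 1 ≤ k i) ∧ X ≤ ∏ i, (k i : ℝ) ^ (β i)}, ∏ i, g i ((k : Fin n → ℕ) i)) ≤
      ∑' k : Fin n → ℕ, ∏ i, g i (k i) :=
    Summable.tsum_subtype_le (fun k : Fin n → ℕ => ∏ i, g i (k i)) _
      (fun k => Finset.prod_nonneg fun i _ => hg0 i (k i)) hH.summable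
  have step4 : (∑' k : Fin n → ℕ, ∏ i, g i (k i)) = C := hH.tsum_eq
  have hXr : X ^ (-δ) ≤ X ^ (a + ε) := Real.rpow_le_rpow_of_exponent_le hX hδge
  have hfin : X ^ (-δ) * C ≤ C * X ^ (a + ε) := by
    rw [mul_comm]
    exact mul_le_mul_of_nonneg_left hXr hCpos.le
  calc (∑' k : {k : Fin n → ℕ // (∀ i, 1 ≤ k i) ∧ X ≤ ∏ i, (k i : ℝ) ^ (β i)},
        ∏ i, ((k : Fin n → ℕ) i : ℝ) ^ (γ i))
      ≤ X ^ (-δ) * ∑' k : {k : Fin n → ℕ //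
        (∀ i, 1 ≤ k i) ∧ X ≤ ∏ i, (k i : ℝ) ^ (β i)}, ∏ i, g i ((k : Fin n → ℕ) i) := by
        rw [← step2]; exact step1
    _ ≤ X ^ (-δ) * C := by
        rw [← step4]
        exact mul_le_mul_of_nonneg_left step3 (Real.rpow_nonneg hXpos.le _)
    _ ≤ C * X ^ (a + ε) := hfin
end
end

section
/- Let S₁ and S₂ be multisets of positive integers with counting functions F_i(X) = #{s ∈ S_i : s ≤ X}, and suppose F_i(X) ~ A_i·X^{n_i}·(ln X)^{r_i} as X → ∞, where A_i > 0, 0 < n_i ≤ 1 and r_i are nonnegative integers, for i = 1, 2. Let a, b > 0 and P_{a,b}(X) = #{(s₁, s₂) : s₁ ∈ S₁, s₂ ∈ S₂, s₁^a·s₂^b ≤ X}. If n₁/a − n₂/b > 0, then there exists a constant C > 0 such that P_{a,b}(X) ~ C·X^{n₁/a}·(ln X)^{r₁}. -/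
open Filter

noncomputable section

namespace ProductDistAux

open Real

variable {S : Type*}

lemma card_mono (f : S → ℕ) (hfin : ∀ X : ℝ, {s : S | (f s : ℝ) ≤ X}.Finite)
    {Y Y' : ℝ} (h : Y ≤ Y') :
    Nat.card {s : S // (f s : ℝ) ≤ Y} ≤ Nat.card {s : S // (f s : ℝ) ≤ Y'} := by
  have e1 : Nat.card {s : S // (f s : ℝ) ≤ Y} = Nat.card {s : S | (f s : ℝ) ≤ Y} := rfl
  have e2 : Nat.card {s : S // (f s : ℝ) ≤ Y'} = Nat.card {s : S | (f s : ℝ) ≤ Y'} := rfl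
  rw [e1, e2, Nat.card_coe_set_eq, Nat.card_coe_set_eq]
  exact Set.ncard_le_ncard (fun s hs => le_trans hs h) (hfin Y')

lemma global_bound (f : S → ℕ) (hfin : ∀ X : ℝ, {s : S | (f s : ℝ) ≤ X}.Finite)
    {A n : ℝ} {r : ℕ} (hA : 0 < A) (hn : 0 ≤ n)
    (hF : Tendsto (fun X : ℝ => (Nat.card {s : S // (f s : ℝ) ≤ X} : ℝ) /
        (A * X ^ n * Real.log X ^ r)) atTop (nhds 1)) :
    ∃ K : ℝ, 0 < K ∧ ∀ Y : ℝ, 1 ≤ Y →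
      (Nat.card {s : S // (f s : ℝ) ≤ Y} : ℝ) ≤ K * (Y ^ n * (1 + Real.log Y) ^ r) := by
  have h2 : ∀ᶠ X in atTop, (Nat.card {s : S // (f s : ℝ) ≤ X} : ℝ) /
      (A * X ^ n * Real.log X ^ r) ≤ 2 :=
    hF.eventually (eventually_le_nhds (by norm_num))
  obtain ⟨X₀, hX₀⟩ := eventually_atTop.mp h2
  set Y₀ : ℝ := max X₀ (Real.exp 1) with hY₀def
  have hY₀e : Real.exp 1 ≤ Y₀ := le_max_right _ _
  have hY₀1 : (1:ℝ) ≤ Y₀ := le_trans (by nlinarith [Real.add_one_le_exp (1:ℝ)]) hY₀e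
  have hbig : ∀ Y : ℝ, Y₀ ≤ Y →
      (Nat.card {s : S // (f s : ℝ) ≤ Y} : ℝ) ≤ 2 * A * (Y ^ n * (1 + Real.log Y) ^ r) := by
    intro Y hY
    have hY1 : (1:ℝ) ≤ Y := le_trans hY₀1 hY
    have hY0 : (0:ℝ) < Y := by linarith
    have hlog : (1:ℝ) ≤ Real.log Y := by
      rw [Real.le_log_iff_exp_le hY0]
      exact le_trans hY₀e hY
    have hD : 0 < A * Y ^ n * Real.log Y ^ r := by
      apply mul_pos (mul_pos hA (Real.rpow_pos_of_pos hY0 n))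
      exact pow_pos (by linarith) r
    have := hX₀ Y (le_trans (le_max_left _ _) hY)
    rw [div_le_iff₀ hD] at this
    calc (Nat.card {s : S // (f s : ℝ) ≤ Y} : ℝ) ≤ 2 * (A * Y ^ n * Real.log Y ^ r) := this
      _ ≤ 2 * A * (Y ^ n * (1 + Real.log Y) ^ r) := by
          have : Real.log Y ^ r ≤ (1 + Real.log Y) ^ r :=
            pow_le_pow_left₀ (by linarith) (by linarith) r
          have hYn : (0:ℝ) ≤ Y ^ n := (Real.rpow_pos_of_pos hY0 n).le
          nlinarith [mul_le_mul_of_nonneg_left this hYn]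
  set M : ℝ := (Nat.card {s : S // (f s : ℝ) ≤ Y₀} : ℝ) with hMdef
  have hM0 : 0 ≤ M := Nat.cast_nonneg _
  refine ⟨2 * A + M + 1, by positivity, fun Y hY => ?_⟩
  have hY0 : (0:ℝ) < Y := by linarith
  have hE1 : (1:ℝ) ≤ Y ^ n * (1 + Real.log Y) ^ r := by
    have h1 : (1:ℝ) ≤ Y ^ n := Real.one_le_rpow hY hn
    have h2 : (1:ℝ) ≤ (1 + Real.log Y) ^ r :=
      one_le_pow₀ (by linarith [Real.log_nonneg hY])
    nlinarith
  rcases le_or_gt Y₀ Y with hc | hc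
  · calc (Nat.card {s : S // (f s : ℝ) ≤ Y} : ℝ)
        ≤ 2 * A * (Y ^ n * (1 + Real.log Y) ^ r) := hbig Y hc
      _ ≤ (2 * A + M + 1) * (Y ^ n * (1 + Real.log Y) ^ r) := by nlinarith
  · have : (Nat.card {s : S // (f s : ℝ) ≤ Y} : ℝ) ≤ M := by
      rw [hMdef]; exact_mod_cast card_mono f hfin hc.le
    calc (Nat.card {s : S // (f s : ℝ) ≤ Y} : ℝ) ≤ M := this
      _ ≤ (2 * A + M + 1) * (Y ^ n * (1 + Real.log Y) ^ r) := by nlinarith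

lemma log_poly_bound (r : ℕ) {δ : ℝ} (hδ : 0 < δ) :
    ∃ Cr : ℝ, 0 < Cr ∧ ∀ Y : ℝ, 1 ≤ Y → (1 + Real.log Y) ^ r ≤ Cr * Y ^ δ := by
  set s : ℝ := δ / (r + 1) with hsdef
  have hs : 0 < s := by positivity
  refine ⟨(1 + 1/s) ^ r, by positivity, fun Y hY => ?_⟩
  have hY0 : (0:ℝ) < Y := by linarith
  have hYs1 : (1:ℝ) ≤ Y ^ s := Real.one_le_rpow hY hs.le
  have hYs0 : (0:ℝ) < Y ^ s := by linarith
  have hlog : Real.log Y ≤ Y ^ s / s := by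
    have h1 : Real.log (Y ^ s) ≤ Y ^ s := by
      nlinarith [Real.log_le_sub_one_of_pos hYs0]
    have h2 : Real.log (Y ^ s) = s * Real.log Y := Real.log_rpow hY0 s
    rw [le_div_iff₀ hs]
    nlinarith
  have h3 : 1 + Real.log Y ≤ (1 + 1/s) * Y ^ s := by
    have : (1 + 1/s) * Y ^ s = Y ^ s + Y ^ s / s := by field_simp
    rw [this]
    linarith
  have h4 : (1 + Real.log Y) ^ r ≤ ((1 + 1/s) * Y ^ s) ^ r :=
    pow_le_pow_left₀ (by linarith [Real.log_nonneg hY]) h3 r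
  calc (1 + Real.log Y) ^ r ≤ ((1 + 1/s) * Y ^ s) ^ r := h4
    _ = (1 + 1/s) ^ r * (Y ^ s) ^ r := mul_pow _ _ _
    _ ≤ (1 + 1/s) ^ r * Y ^ δ := by
        apply mul_le_mul_of_nonneg_left _ (by positivity)
        have e : (Y ^ s) ^ r = Y ^ (s * r) := by
          rw [← Real.rpow_natCast (Y ^ s) r, ← Real.rpow_mul hY0.le]
        rw [e]
        apply Real.rpow_le_rpow_of_exponent_le hY
        rw [hsdef]
        rw [div_mul_eq_mul_div, div_le_iff₀ (by positivity)]
        nlinarith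

lemma power_bound (f : S → ℕ) (hfin : ∀ X : ℝ, {s : S | (f s : ℝ) ≤ X}.Finite)
    {A n : ℝ} {r : ℕ} (hA : 0 < A) (hn : 0 ≤ n)
    (hF : Tendsto (fun X : ℝ => (Nat.card {s : S // (f s : ℝ) ≤ X} : ℝ) /
        (A * X ^ n * Real.log X ^ r)) atTop (nhds 1))
    {m : ℝ} (hm : n < m) :
    ∃ K : ℝ, 0 < K ∧ ∀ Y : ℝ, 1 ≤ Y →
      (Nat.card {s : S // (f s : ℝ) ≤ Y} : ℝ) ≤ K * Y ^ m := by
  obtain ⟨K, hK, hKb⟩ := global_bound f hfin hA hn hF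
  obtain ⟨Cr, hCr, hCrb⟩ := log_poly_bound r (by linarith : (0:ℝ) < m - n)
  refine ⟨K * Cr, by positivity, fun Y hY => ?_⟩
  have hY0 : (0:ℝ) < Y := by linarith
  calc (Nat.card {s : S // (f s : ℝ) ≤ Y} : ℝ)
      ≤ K * (Y ^ n * (1 + Real.log Y) ^ r) := hKb Y hY
    _ ≤ K * (Y ^ n * (Cr * Y ^ (m - n))) := by
        apply mul_le_mul_of_nonneg_left _ hK.le
        exact mul_le_mul_of_nonneg_left (hCrb Y hY) (Real.rpow_pos_of_pos hY0 n).le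
    _ = K * Cr * Y ^ m := by
        rw [show Y ^ n * (Cr * Y ^ (m - n)) = Cr * (Y ^ n * Y ^ (m - n)) by ring,
          ← Real.rpow_add hY0]
        ring_nf

lemma summable_neg_rpow (f : S → ℕ) (hf : ∀ s, 1 ≤ f s)
    (hfin : ∀ X : ℝ, {s : S | (f s : ℝ) ≤ X}.Finite)
    {K c' c : ℝ} (hK : 0 < K) (hc' : 0 < c') (hcc : c' < c)
    (hbound : ∀ Y : ℝ, 1 ≤ Y → (Nat.card {s : S // (f s : ℝ) ≤ Y} : ℝ) ≤ K * Y ^ c') :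
    Summable (fun s : S => (f s : ℝ) ^ (-c)) := by
  classical
  set q : ℝ := (2:ℝ) ^ (c' - c) with hqdef
  have hq0 : 0 ≤ q := Real.rpow_nonneg (by norm_num) _
  have hq1 : q < 1 := Real.rpow_lt_one_of_one_lt_of_neg one_lt_two (by linarith)
  have hgeom : Summable (fun k : ℕ => (K * (2:ℝ) ^ c') * q ^ k) :=
    (summable_geometric_of_lt_one hq0 hq1).mul_left _
  apply summable_of_sum_le (c := ∑' k : ℕ, (K * (2:ℝ) ^ c') * q ^ k)
    (fun s => Real.rpow_nonneg (Nat.cast_nonneg _) _)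
  intro u
  have hmaps : ∀ x ∈ u, Nat.log 2 (f x) ∈ u.image (fun s => Nat.log 2 (f s)) :=
    fun x hx => Finset.mem_image_of_mem _ hx
  rw [← Finset.sum_fiberwise_of_maps_to hmaps (fun s => (f s : ℝ) ^ (-c))]
  have hfiber : ∀ k ∈ u.image (fun s => Nat.log 2 (f s)),
      (∑ s ∈ u.filter (fun s => Nat.log 2 (f s) = k), (f s : ℝ) ^ (-c))
        ≤ (K * (2:ℝ) ^ c') * q ^ k := by
    intro k _
    have hterm : ∀ s ∈ u.filter (fun s => Nat.log 2 (f s) = k),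
        (f s : ℝ) ^ (-c) ≤ ((2:ℝ) ^ k) ^ (-c) := by
      intro s hs
      rw [Finset.mem_filter] at hs
      have h2k : ((2:ℝ) ^ k) ≤ (f s : ℝ) := by
        have := Nat.pow_log_le_self 2 (Nat.one_le_iff_ne_zero.mp (hf s))
        rw [hs.2] at this
        exact_mod_cast this
      have h2k0 : (0:ℝ) < (2:ℝ) ^ k := by positivity
      rw [Real.rpow_neg (by positivity), Real.rpow_neg (by linarith)]
      apply inv_anti₀ (Real.rpow_pos_of_pos h2k0 c)
      exact Real.rpow_le_rpow h2k0.le h2k (by linarith)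
    have hcard : ((u.filter (fun s => Nat.log 2 (f s) = k)).card : ℝ)
        ≤ K * ((2:ℝ) ^ (k+1)) ^ c' := by
      have hsub : u.filter (fun s => Nat.log 2 (f s) = k)
          ⊆ (hfin ((2:ℝ) ^ (k+1))).toFinset := by
        intro s hs
        rw [Finset.mem_filter] at hs
        rw [Set.Finite.mem_toFinset]
        show (f s : ℝ) ≤ (2:ℝ) ^ (k+1)
        have := Nat.lt_pow_succ_log_self (by norm_num : 1 < 2) (f s)
        rw [hs.2] at this
        have : (f s : ℝ) < ((2 ^ (k+1) : ℕ) : ℝ) := by exact_mod_cast this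
        push_cast at this
        linarith
      have h1 : (u.filter (fun s => Nat.log 2 (f s) = k)).card
          ≤ Nat.card {s : S // (f s : ℝ) ≤ (2:ℝ) ^ (k+1)} := by
        have e : Nat.card {s : S // (f s : ℝ) ≤ (2:ℝ) ^ (k+1)}
            = Nat.card {s : S | (f s : ℝ) ≤ (2:ℝ) ^ (k+1)} := rfl
        rw [e, Nat.card_coe_set_eq,
          Set.ncard_eq_toFinset_card _ (hfin ((2:ℝ) ^ (k+1)))]
        exact Finset.card_le_card hsub
      calc ((u.filter (fun s => Nat.log 2 (f s) = k)).card : ℝ)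
          ≤ (Nat.card {s : S // (f s : ℝ) ≤ (2:ℝ) ^ (k+1)} : ℝ) := by exact_mod_cast h1
        _ ≤ K * ((2:ℝ) ^ (k+1)) ^ c' := hbound _ (one_le_pow₀ (by norm_num))
    calc (∑ s ∈ u.filter (fun s => Nat.log 2 (f s) = k), (f s : ℝ) ^ (-c))
        ≤ ∑ _s ∈ u.filter (fun s => Nat.log 2 (f s) = k), ((2:ℝ) ^ k) ^ (-c) :=
          Finset.sum_le_sum hterm
      _ = ((u.filter (fun s => Nat.log 2 (f s) = k)).card : ℝ) * ((2:ℝ) ^ k) ^ (-c) := by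
          rw [Finset.sum_const, nsmul_eq_mul]
      _ ≤ (K * ((2:ℝ) ^ (k+1)) ^ c') * ((2:ℝ) ^ k) ^ (-c) := by
          apply mul_le_mul_of_nonneg_right hcard
          exact Real.rpow_nonneg (by positivity) _
      _ = (K * (2:ℝ) ^ c') * q ^ k := by
          have e1 : ((2:ℝ) ^ (k+1)) ^ c' = (2:ℝ) ^ (((k:ℝ)+1) * c') := by
            rw [← Real.rpow_natCast 2 (k+1), ← Real.rpow_mul (by norm_num)]
            push_cast
            ring_nf
          have e2 : ((2:ℝ) ^ k) ^ (-c) = (2:ℝ) ^ ((k:ℝ) * (-c)) := by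
            rw [← Real.rpow_natCast 2 k, ← Real.rpow_mul (by norm_num)]
          have e3 : q ^ k = (2:ℝ) ^ ((c' - c) * (k:ℝ)) := by
            rw [hqdef, ← Real.rpow_natCast ((2:ℝ) ^ (c' - c)) k,
              ← Real.rpow_mul (by norm_num)]
          rw [e1, e2, e3, mul_assoc, ← Real.rpow_add (by norm_num : (0:ℝ) < 2),
            mul_assoc, ← Real.rpow_add (by norm_num : (0:ℝ) < 2)]
          ring_nf
  calc (∑ k ∈ u.image (fun s => Nat.log 2 (f s)),
        ∑ s ∈ u.filter (fun s => Nat.log 2 (f s) = k), (f s : ℝ) ^ (-c))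
      ≤ ∑ k ∈ u.image (fun s => Nat.log 2 (f s)), (K * (2:ℝ) ^ c') * q ^ k :=
        Finset.sum_le_sum hfiber
    _ ≤ ∑' k : ℕ, (K * (2:ℝ) ^ c') * q ^ k :=
        Summable.sum_le_tsum _ (fun k _ => by positivity) hgeom

lemma counting_eq {S₁ S₂ : Type*} (f₁ : S₁ → ℕ) (f₂ : S₂ → ℕ)
    (hf₁ : ∀ s, 1 ≤ f₁ s) (hf₂ : ∀ s, 1 ≤ f₂ s)
    (hfin₁ : ∀ X : ℝ, {s : S₁ | (f₁ s : ℝ) ≤ X}.Finite)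
    (hfin₂ : ∀ X : ℝ, {s : S₂ | (f₂ s : ℝ) ≤ X}.Finite)
    {a b : ℝ} (ha : 0 < a) (hb : 0 < b) {X : ℝ} (hX : 1 ≤ X) :
    (Nat.card {p : S₁ × S₂ // (f₁ p.1 : ℝ) ^ a * (f₂ p.2 : ℝ) ^ b ≤ X} : ℝ)
      = ∑' s₂ : S₂,
          (Nat.card {s₁ : S₁ // (f₁ s₁ : ℝ) ≤ (X / (f₂ s₂ : ℝ) ^ b) ^ (1/a)} : ℝ) := by
  classical
  have hX0 : (0:ℝ) < X := lt_of_lt_of_le one_pos hX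
  have hf₁R : ∀ s, (1:ℝ) ≤ (f₁ s : ℝ) := fun s => by exact_mod_cast hf₁ s
  have hf₂R : ∀ s, (1:ℝ) ≤ (f₂ s : ℝ) := fun s => by exact_mod_cast hf₂ s
  have htb : ∀ s, (0:ℝ) < (f₂ s : ℝ) ^ b :=
    fun s => Real.rpow_pos_of_pos (by linarith [hf₂R s]) b
  have htb1 : ∀ s, (1:ℝ) ≤ (f₂ s : ℝ) ^ b :=
    fun s => Real.one_le_rpow (hf₂R s) hb.le
  have key : ∀ (s₁ : S₁) (s₂ : S₂),
      ((f₁ s₁ : ℝ) ^ a * (f₂ s₂ : ℝ) ^ b ≤ X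
        ↔ (f₁ s₁ : ℝ) ≤ (X / (f₂ s₂ : ℝ) ^ b) ^ (1/a)) := by
    intro s₁ s₂
    rw [one_div, Real.le_rpow_inv_iff_of_pos (by linarith [hf₁R s₁])
      (by positivity) ha, le_div_iff₀ (htb s₂)]
  have hE : {p : S₁ × S₂ | (f₁ p.1 : ℝ) ^ a * (f₂ p.2 : ℝ) ^ b ≤ X}.Finite := by
    apply Set.Finite.subset ((hfin₁ (X ^ (1/a))).prod (hfin₂ (X ^ (1/b))))
    rintro ⟨s₁, s₂⟩ hp
    simp only [Set.mem_setOf_eq] at hp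
    have h1 : (f₁ s₁ : ℝ) ^ a ≤ X := by
      nlinarith [htb1 s₂, Real.rpow_pos_of_pos (by linarith [hf₁R s₁] : (0:ℝ) < (f₁ s₁:ℝ)) a]
    have h2 : (f₂ s₂ : ℝ) ^ b ≤ X := by
      nlinarith [Real.one_le_rpow (hf₁R s₁) ha.le, htb s₂]
    constructor
    · show (f₁ s₁ : ℝ) ≤ X ^ (1/a)
      rw [one_div, Real.le_rpow_inv_iff_of_pos (by linarith [hf₁R s₁]) hX0.le ha]
      exact h1
    · show (f₂ s₂ : ℝ) ≤ X ^ (1/b)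
      rw [one_div, Real.le_rpow_inv_iff_of_pos (by linarith [hf₂R s₂]) hX0.le hb]
      exact h2
  set t : Finset S₂ := (hfin₂ (X ^ (1/b))).toFinset with htdef
  have hcard : ∀ s₂ : S₂,
      Nat.card {s₁ : S₁ // (f₁ s₁ : ℝ) ≤ (X / (f₂ s₂ : ℝ) ^ b) ^ (1/a)}
        = (hfin₁ ((X / (f₂ s₂ : ℝ) ^ b) ^ (1/a))).toFinset.card := by
    intro s₂
    have e : Nat.card {s₁ : S₁ // (f₁ s₁ : ℝ) ≤ (X / (f₂ s₂ : ℝ) ^ b) ^ (1/a)}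
        = Nat.card {s₁ : S₁ | (f₁ s₁ : ℝ) ≤ (X / (f₂ s₂ : ℝ) ^ b) ^ (1/a)} := rfl
    rw [e, Nat.card_coe_set_eq, Set.ncard_eq_toFinset_card _ (hfin₁ _)]
  have hzero : ∀ s₂ ∉ t,
      (Nat.card {s₁ : S₁ // (f₁ s₁ : ℝ) ≤ (X / (f₂ s₂ : ℝ) ^ b) ^ (1/a)} : ℝ) = 0 := by
    intro s₂ hs₂
    have h1 : X ^ (1/b) < (f₂ s₂ : ℝ) := by
      rw [htdef, Set.Finite.mem_toFinset] at hs₂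
      exact lt_of_not_ge hs₂
    have h2 : X < (f₂ s₂ : ℝ) ^ b := by
      have h3 := Real.rpow_lt_rpow (Real.rpow_nonneg hX0.le _) h1 hb
      rwa [← Real.rpow_mul hX0.le, one_div, inv_mul_cancel₀ hb.ne', Real.rpow_one] at h3
    have h4 : (X / (f₂ s₂ : ℝ) ^ b) ^ (1/a) < 1 := by
      apply Real.rpow_lt_one (by positivity) _ (by positivity)
      rw [div_lt_one (htb s₂)]
      exact h2
    have hempty : IsEmpty {s₁ : S₁ // (f₁ s₁ : ℝ) ≤ (X / (f₂ s₂ : ℝ) ^ b) ^ (1/a)} :=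
      ⟨fun ⟨s₁, hs₁⟩ => absurd hs₁ (not_le.mpr (lt_of_lt_of_le h4 (hf₁R s₁)))⟩
    haveI := hempty
    rw [Nat.card_of_isEmpty, Nat.cast_zero]
  rw [tsum_eq_sum hzero]
  have hfib : hE.toFinset.card
      = ∑ s₂ ∈ t, (hfin₁ ((X / (f₂ s₂ : ℝ) ^ b) ^ (1/a))).toFinset.card := by
    rw [Finset.card_eq_sum_card_fiberwise
      (f := fun p : S₁ × S₂ => p.2) (t := t) ?_]
    · refine Finset.sum_congr rfl (fun s₂ _ => ?_)
      apply Finset.card_bij (fun p _ => p.1)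
      · intro p hp
        rw [Finset.mem_filter, Set.Finite.mem_toFinset] at hp
        rw [Set.Finite.mem_toFinset]
        show (f₁ p.1 : ℝ) ≤ (X / (f₂ s₂ : ℝ) ^ b) ^ (1/a)
        rw [← hp.2]
        exact (key p.1 p.2).mp hp.1
      · intro p hp q hq hpq
        rw [Finset.mem_filter] at hp hq
        exact Prod.ext hpq (hp.2.trans hq.2.symm)
      · intro s₁ hs₁
        rw [Set.Finite.mem_toFinset] at hs₁
        refine ⟨(s₁, s₂), ?_, rfl⟩
        rw [Finset.mem_filter, Set.Finite.mem_toFinset]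
        exact ⟨(key s₁ s₂).mpr hs₁, rfl⟩
    · intro p hp
      rw [Finset.mem_coe, Set.Finite.mem_toFinset] at hp
      simp only [Set.mem_setOf_eq] at hp
      rw [Finset.mem_coe, htdef, Set.Finite.mem_toFinset]
      show (f₂ p.2 : ℝ) ≤ X ^ (1/b)
      have h2 : (f₂ p.2 : ℝ) ^ b ≤ X := by
        have := Real.one_le_rpow (hf₁R p.1) ha.le
        nlinarith [htb p.2]
      rw [one_div, Real.le_rpow_inv_iff_of_pos (by linarith [hf₂R p.2]) hX0.le hb]
      exact h2
  have hN : Nat.card {p : S₁ × S₂ // (f₁ p.1 : ℝ) ^ a * (f₂ p.2 : ℝ) ^ b ≤ X}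
      = ∑ s₂ ∈ t, Nat.card {s₁ : S₁ // (f₁ s₁ : ℝ) ≤ (X / (f₂ s₂ : ℝ) ^ b) ^ (1/a)} := by
    have e : Nat.card {p : S₁ × S₂ // (f₁ p.1 : ℝ) ^ a * (f₂ p.2 : ℝ) ^ b ≤ X}
        = Nat.card {p : S₁ × S₂ | (f₁ p.1 : ℝ) ^ a * (f₂ p.2 : ℝ) ^ b ≤ X} := rfl
    rw [e, Nat.card_coe_set_eq, Set.ncard_eq_toFinset_card _ hE, hfib]
    exact Finset.sum_congr rfl fun s₂ _ => (hcard s₂).symm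
  rw [hN]
  push_cast
  rfl

end ProductDistAux

open Real ProductDistAux

set_option maxHeartbeats 1000000

/-- **Product lemma** (Lemma 2.2).  Let `S₁`, `S₂` be multisets of positive integers
(modelled as types `S i` with value maps `f i : S i → ℕ`, with finite counting functions
`F_i(X) = #{s : f_i s ≤ X}`).  Suppose `F_i(X) ~ A_i X^{n_i} (ln X)^{r_i}` with
`A_i > 0`, `0 < n_i ≤ 1`, `r_i ∈ ℤ_{≥0}`.  Let `a, b > 0` with `n₁/a - n₂/b > 0` and
`P_{a,b}(X) = #{(s₁,s₂) : (f₁ s₁)^a (f₂ s₂)^b ≤ X}`.  Then there is a constant `C > 0`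
with `P_{a,b}(X) ~ C X^{n₁/a} (ln X)^{r₁}`. -/
theorem product_distribution (S₁ S₂ : Type*) (f₁ : S₁ → ℕ) (f₂ : S₂ → ℕ)
    (hf₁ : ∀ s, 1 ≤ f₁ s) (hf₂ : ∀ s, 1 ≤ f₂ s)
    (hfin₁ : ∀ X : ℝ, {s : S₁ | (f₁ s : ℝ) ≤ X}.Finite)
    (hfin₂ : ∀ X : ℝ, {s : S₂ | (f₂ s : ℝ) ≤ X}.Finite)
    (A₁ A₂ n₁ n₂ : ℝ) (r₁ r₂ : ℕ) (a b : ℝ)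
    (hA₁ : 0 < A₁) (hA₂ : 0 < A₂)
    (hn₁ : 0 < n₁) (hn₁' : n₁ ≤ 1) (hn₂ : 0 < n₂) (hn₂' : n₂ ≤ 1)
    (ha : 0 < a) (hb : 0 < b) (hgap : 0 < n₁ / a - n₂ / b)
    (hF₁ : Tendsto (fun X : ℝ => (Nat.card {s : S₁ // (f₁ s : ℝ) ≤ X} : ℝ) /
        (A₁ * X ^ n₁ * Real.log X ^ r₁)) atTop (nhds 1))
    (hF₂ : Tendsto (fun X : ℝ => (Nat.card {s : S₂ // (f₂ s : ℝ) ≤ X} : ℝ) /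
        (A₂ * X ^ n₂ * Real.log X ^ r₂)) atTop (nhds 1)) :
    ∃ C : ℝ, 0 < C ∧
      Tendsto (fun X : ℝ =>
          (Nat.card {p : S₁ × S₂ // (f₁ p.1 : ℝ) ^ a * (f₂ p.2 : ℝ) ^ b ≤ X} : ℝ) /
        (C * X ^ (n₁ / a) * Real.log X ^ r₁)) atTop (nhds 1) := by
  classical
  open ProductDistAux in
  -- basic positivity facts
  have hf₁R : ∀ s, (1:ℝ) ≤ (f₁ s : ℝ) := fun s => by exact_mod_cast hf₁ s
  have hf₂R : ∀ s, (1:ℝ) ≤ (f₂ s : ℝ) := fun s => by exact_mod_cast hf₂ s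
  set c : ℝ := b * (n₁ / a) with hcdef
  have hcpos : 0 < c := by
    have : 0 < n₁ / a := div_pos hn₁ ha
    positivity
  have hn₂c : n₂ < c := by
    have h1 : n₂ / b < n₁ / a := by linarith
    calc n₂ = b * (n₂ / b) := by field_simp
      _ < b * (n₁ / a) := by exact mul_lt_mul_of_pos_left h1 hb
  -- the summand functions
  set G : ℝ → S₂ → ℝ := fun X s₂ =>
    (Nat.card {s₁ : S₁ // (f₁ s₁ : ℝ) ≤ (X / (f₂ s₂ : ℝ) ^ b) ^ (1/a)} : ℝ) with hGdef
  set term : ℝ → S₂ → ℝ := fun X s₂ =>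
    G X s₂ / (X ^ (n₁ / a) * Real.log X ^ r₁) with htermdef
  set L : S₂ → ℝ := fun s₂ => A₁ * (f₂ s₂ : ℝ) ^ (-c) * (1/a) ^ r₁ with hLdef
  -- nonemptiness of S₂
  have hne : Nonempty S₂ := by
    by_contra h
    rw [not_nonempty_iff] at h
    have h0 : Tendsto (fun X : ℝ => (0:ℝ)) atTop (nhds 1) := by
      apply hF₂.congr
      intro X
      haveI : IsEmpty {s : S₂ // (f₂ s : ℝ) ≤ X} := ⟨fun s => h.elim s.1⟩
      simp [Nat.card_of_isEmpty]
    exact absurd (tendsto_nhds_unique h0 tendsto_const_nhds) one_ne_zero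
  -- summability of the comparison series
  have hsum0 : Summable (fun s₂ : S₂ => (f₂ s₂ : ℝ) ^ (-c)) := by
    set c' : ℝ := (n₂ + c) / 2 with hc'def
    have hc'1 : 0 < c' := by positivity
    have hc'2 : c' < c := by rw [hc'def]; linarith
    have hc'3 : n₂ < c' := by rw [hc'def]; linarith
    obtain ⟨K₂, hK₂, hK₂b⟩ := power_bound f₂ hfin₂ hA₂ hn₂.le hF₂ hc'3
    exact summable_neg_rpow f₂ hf₂ hfin₂ hK₂ hc'1 hc'2 hK₂b
  have hLsum : Summable L := (hsum0.mul_left A₁).mul_right ((1/a) ^ r₁)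
  -- the constant
  set C : ℝ := ∑' s₂, L s₂ with hCdef
  have hLpos : ∀ s₂, 0 < L s₂ := by
    intro s₂
    have h1 : (0:ℝ) < (f₂ s₂ : ℝ) ^ (-c) :=
      Real.rpow_pos_of_pos (by linarith [hf₂R s₂]) _
    have h2 : (0:ℝ) < (1/a) ^ r₁ := by positivity
    positivity
  have hC : 0 < C := Summable.tsum_pos hLsum (fun s₂ => (hLpos s₂).le)
    (Classical.arbitrary S₂) (hLpos _)
  -- per-term limits
  have hterm_lim : ∀ s₂ : S₂, Tendsto (fun X => term X s₂) atTop (nhds (L s₂)) := by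
    intro s₂
    set T : ℝ := (f₂ s₂ : ℝ) ^ b with hTdef
    have hT1 : (1:ℝ) ≤ T := Real.one_le_rpow (hf₂R s₂) hb.le
    have hT0 : (0:ℝ) < T := by linarith
    have hlogT : 0 ≤ Real.log T := Real.log_nonneg hT1
    have hYtop : Tendsto (fun X : ℝ => (X / T) ^ (1/a)) atTop atTop :=
      (tendsto_rpow_atTop (by positivity)).comp (tendsto_id.atTop_div_const hT0)
    have h1 : Tendsto (fun X : ℝ => G X s₂ /
        (A₁ * ((X / T) ^ (1/a)) ^ n₁ * Real.log ((X / T) ^ (1/a)) ^ r₁)) atTop (nhds 1) :=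
      hF₁.comp hYtop
    -- the ratio of normalizations
    have h2 : Tendsto (fun X : ℝ => A₁ * ((X / T) ^ (1/a)) ^ n₁ *
        Real.log ((X / T) ^ (1/a)) ^ r₁ / (X ^ (n₁ / a) * Real.log X ^ r₁))
        atTop (nhds (L s₂)) := by
      have hφ : Tendsto (fun X : ℝ => A₁ * (f₂ s₂ : ℝ) ^ (-c) *
          ((1/a) * (1 - Real.log T / Real.log X)) ^ r₁) atTop
          (nhds (A₁ * (f₂ s₂ : ℝ) ^ (-c) * ((1/a) * (1 - Real.log T * 0)) ^ r₁)) := by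
        apply Tendsto.const_mul
        apply Tendsto.pow
        apply Tendsto.const_mul
        apply Tendsto.const_sub
        have := (Real.tendsto_log_atTop.inv_tendsto_atTop).const_mul (Real.log T)
        simpa [div_eq_mul_inv] using this
      have hval : A₁ * (f₂ s₂ : ℝ) ^ (-c) * ((1/a) * (1 - Real.log T * 0)) ^ r₁ = L s₂ := by
        rw [hLdef]; norm_num
      rw [hval] at hφ
      apply hφ.congr'
      filter_upwards [eventually_ge_atTop (Real.exp 1)] with X hX
      have hX1 : (1:ℝ) < X := lt_of_lt_of_le (by nlinarith [Real.add_one_le_exp (1:ℝ)]) hX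
      have hX0 : (0:ℝ) < X := by linarith
      have hlogX : (1:ℝ) ≤ Real.log X := by
        rw [Real.le_log_iff_exp_le hX0]; exact hX
      have hlogX0 : Real.log X ≠ 0 := by linarith
      have hXT0 : (0:ℝ) < X / T := by positivity
      have eY : ((X / T) ^ (1/a)) ^ n₁ = X ^ (n₁ / a) * (f₂ s₂ : ℝ) ^ (-c) := by
        rw [← Real.rpow_mul hXT0.le]
        have e1 : 1 / a * n₁ = n₁ / a := by field_simp
        rw [e1, Real.div_rpow hX0.le hT0.le, hTdef, ← Real.rpow_mul
          (by linarith [hf₂R s₂] : (0:ℝ) ≤ (f₂ s₂ : ℝ))]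
        rw [div_eq_mul_inv,
          ← Real.rpow_neg (by linarith [hf₂R s₂] : (0:ℝ) ≤ (f₂ s₂ : ℝ))]
      have eLog : Real.log ((X / T) ^ (1/a)) = (1/a) * (Real.log X - Real.log T) := by
        rw [Real.log_rpow hXT0, Real.log_div (by linarith) (by linarith)]
      rw [eY, eLog]
      have hXg : (0:ℝ) < X ^ (n₁ / a) := Real.rpow_pos_of_pos hX0 _
      have hk : (1/a) * (1 - Real.log T / Real.log X) * Real.log X
          = (1/a) * (Real.log X - Real.log T) := by
        rw [mul_assoc, sub_mul, div_mul_cancel₀ _ hlogX0, one_mul]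
      rw [eq_div_iff (mul_pos hXg (pow_pos (by linarith) _)).ne', ← hk,
        mul_pow ((1/a) * (1 - Real.log T / Real.log X)) (Real.log X)]
      ring
    have h3 := h1.mul h2
    rw [one_mul] at h3
    apply h3.congr'
    filter_upwards [hYtop.eventually_gt_atTop 1, eventually_gt_atTop (0:ℝ)] with X hY1 hX0
    have hYpos : (0:ℝ) < (X / T) ^ (1/a) := by
      change (0:ℝ) < (fun X => (X / T) ^ (1/a)) X
      have : (1:ℝ) < (fun X : ℝ => (X / T) ^ (1/a)) X := hY1
      linarith
    have hlogY : (0:ℝ) < Real.log ((X / T) ^ (1/a)) := Real.log_pos hY1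
    have hD : A₁ * ((X / T) ^ (1/a)) ^ n₁ * Real.log ((X / T) ^ (1/a)) ^ r₁ ≠ 0 := by
      have h4 : (0:ℝ) < ((X / T) ^ (1/a)) ^ n₁ := Real.rpow_pos_of_pos hYpos _
      positivity
    rw [htermdef]
    field_simp
  -- the uniform bound
  obtain ⟨K₁, hK₁, hK₁b⟩ := global_bound f₁ hfin₁ hA₁ hn₁.le hF₁
  set bound : S₂ → ℝ := fun s₂ => K₁ * (1 + 1/a) ^ r₁ * (f₂ s₂ : ℝ) ^ (-c) with hbdef
  have hbsum : Summable bound := hsum0.mul_left _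
  have hbound : ∀ᶠ X : ℝ in atTop, ∀ s₂, ‖term X s₂‖ ≤ bound s₂ := by
    filter_upwards [eventually_ge_atTop (Real.exp 1)] with X hX s₂
    have hX1 : (1:ℝ) < X := lt_of_lt_of_le (by nlinarith [Real.add_one_le_exp (1:ℝ)]) hX
    have hX0 : (0:ℝ) < X := by linarith
    have hlogX : (1:ℝ) ≤ Real.log X := by
      rw [Real.le_log_iff_exp_le hX0]; exact hX
    have hD : (0:ℝ) < X ^ (n₁ / a) * Real.log X ^ r₁ := by
      have h4 : (0:ℝ) < X ^ (n₁ / a) := Real.rpow_pos_of_pos hX0 _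
      have h5 : (0:ℝ) < Real.log X ^ r₁ := pow_pos (by linarith) _
      positivity
    have hG0 : 0 ≤ G X s₂ := Nat.cast_nonneg _
    have htermnn : 0 ≤ term X s₂ := div_nonneg hG0 hD.le
    rw [Real.norm_eq_abs, abs_of_nonneg htermnn]
    set T : ℝ := (f₂ s₂ : ℝ) ^ b with hTdef
    have hT1 : (1:ℝ) ≤ T := Real.one_le_rpow (hf₂R s₂) hb.le
    have hT0 : (0:ℝ) < T := by linarith
    have hlogT : 0 ≤ Real.log T := Real.log_nonneg hT1
    have hbnn : 0 ≤ bound s₂ := by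
      have h1 : (0:ℝ) ≤ (f₂ s₂ : ℝ) ^ (-c) :=
        (Real.rpow_pos_of_pos (by linarith [hf₂R s₂]) _).le
      have h2 : (0:ℝ) ≤ (1 + 1/a) ^ r₁ := by positivity
      rw [hbdef]; positivity
    rcases le_or_gt T X with hc1 | hc1
    · -- main case
      have hXT1 : (1:ℝ) ≤ X / T := (one_le_div hT0).mpr hc1
      have hXT0 : (0:ℝ) < X / T := by linarith
      have hY1 : (1:ℝ) ≤ (X / T) ^ (1/a) := Real.one_le_rpow hXT1 (by positivity)
      have hGb := hK₁b ((X / T) ^ (1/a)) hY1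
      have eY : ((X / T) ^ (1/a)) ^ n₁ = X ^ (n₁ / a) * (f₂ s₂ : ℝ) ^ (-c) := by
        rw [← Real.rpow_mul hXT0.le]
        have e1 : 1 / a * n₁ = n₁ / a := by field_simp
        rw [e1, Real.div_rpow hX0.le hT0.le, hTdef, ← Real.rpow_mul
          (by linarith [hf₂R s₂] : (0:ℝ) ≤ (f₂ s₂ : ℝ))]
        rw [div_eq_mul_inv,
          ← Real.rpow_neg (by linarith [hf₂R s₂] : (0:ℝ) ≤ (f₂ s₂ : ℝ))]
      have eLog : Real.log ((X / T) ^ (1/a)) = (1/a) * (Real.log X - Real.log T) := by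
        rw [Real.log_rpow hXT0, Real.log_div (by linarith) (by linarith)]
      have hlb : 1 + Real.log ((X / T) ^ (1/a)) ≤ (1 + 1/a) * Real.log X := by
        rw [eLog]
        have h6 : (1/a) * Real.log T ≥ 0 := by positivity
        have h7 : (1/a) * Real.log X ≥ 0 := by positivity
        nlinarith
      have hlognn : 0 ≤ 1 + Real.log ((X / T) ^ (1/a)) := by
        have := Real.log_nonneg hY1
        linarith
      have hpow : (1 + Real.log ((X / T) ^ (1/a))) ^ r₁
          ≤ (1 + 1/a) ^ r₁ * Real.log X ^ r₁ := by
        calc (1 + Real.log ((X / T) ^ (1/a))) ^ r₁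
            ≤ ((1 + 1/a) * Real.log X) ^ r₁ := pow_le_pow_left₀ hlognn hlb r₁
          _ = (1 + 1/a) ^ r₁ * Real.log X ^ r₁ := mul_pow _ _ _
      have hGb2 : G X s₂ ≤ K₁ * (X ^ (n₁ / a) * (f₂ s₂ : ℝ) ^ (-c) *
          ((1 + 1/a) ^ r₁ * Real.log X ^ r₁)) := by
        have h8 : (0:ℝ) ≤ ((X / T) ^ (1/a)) ^ n₁ := (Real.rpow_pos_of_pos
          (Real.rpow_pos_of_pos hXT0 _) _).le
        calc G X s₂ ≤ K₁ * (((X / T) ^ (1/a)) ^ n₁ *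
              (1 + Real.log ((X / T) ^ (1/a))) ^ r₁) := hGb
          _ ≤ K₁ * (((X / T) ^ (1/a)) ^ n₁ *
              ((1 + 1/a) ^ r₁ * Real.log X ^ r₁)) := by
              apply mul_le_mul_of_nonneg_left _ hK₁.le
              exact mul_le_mul_of_nonneg_left hpow h8
          _ = K₁ * (X ^ (n₁ / a) * (f₂ s₂ : ℝ) ^ (-c) *
              ((1 + 1/a) ^ r₁ * Real.log X ^ r₁)) := by rw [eY]
      rw [htermdef]
      show G X s₂ / (X ^ (n₁ / a) * Real.log X ^ r₁) ≤ bound s₂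
      rw [div_le_iff₀ hD]
      calc G X s₂ ≤ K₁ * (X ^ (n₁ / a) * (f₂ s₂ : ℝ) ^ (-c) *
            ((1 + 1/a) ^ r₁ * Real.log X ^ r₁)) := hGb2
        _ = bound s₂ * (X ^ (n₁ / a) * Real.log X ^ r₁) := by rw [hbdef]; ring
    · -- G = 0
      have hY1 : (X / T) ^ (1/a) < 1 := by
        apply Real.rpow_lt_one (by positivity) _ (by positivity)
        rw [div_lt_one hT0]
        exact hc1
      have hempty : IsEmpty {s₁ : S₁ // (f₁ s₁ : ℝ) ≤ (X / (f₂ s₂ : ℝ) ^ b) ^ (1/a)} := by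
        refine ⟨fun s => absurd s.2 (not_le.mpr ?_)⟩
        calc (X / (f₂ s₂ : ℝ) ^ b) ^ (1/a) = (X / T) ^ (1/a) := by rw [hTdef]
          _ < 1 := hY1
          _ ≤ (f₁ s.1 : ℝ) := hf₁R s.1
      have hGz : G X s₂ = 0 := by
        haveI := hempty
        show (Nat.card {s₁ : S₁ // (f₁ s₁ : ℝ) ≤ (X / (f₂ s₂ : ℝ) ^ b) ^ (1/a)} : ℝ) = 0
        rw [Nat.card_of_isEmpty, Nat.cast_zero]
      rw [htermdef]
      show G X s₂ / (X ^ (n₁ / a) * Real.log X ^ r₁) ≤ bound s₂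
      rw [hGz, zero_div]
      exact hbnn
  -- dominated convergence
  have hS : Tendsto (fun X : ℝ => ∑' s₂, term X s₂) atTop (nhds C) := by
    rw [hCdef]
    exact tendsto_tsum_of_dominated_convergence hbsum hterm_lim hbound
  refine ⟨C, hC, ?_⟩
  have hfin : Tendsto (fun X : ℝ => (∑' s₂, term X s₂) / C) atTop (nhds (C / C)) :=
    hS.div_const C
  rw [div_self hC.ne'] at hfin
  apply hfin.congr'
  filter_upwards [eventually_ge_atTop (1:ℝ)] with X hX1
  rw [counting_eq f₁ f₂ hf₁ hf₂ hfin₁ hfin₂ ha hb hX1,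
    show C * X ^ (n₁ / a) * Real.log X ^ r₁
      = X ^ (n₁ / a) * Real.log X ^ r₁ * C from by ring, ← div_div]
  congr 1
  exact tsum_div_const
end
end
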